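/- There exists a constant C > 0 (depending only on K) such that for all λ > 0, x > 0 and z > −1, the Taylor remainder B(λ, x, z) = Ĉ(λ, x(1+z)) − Ĉ(λ, x) − z x ∂Ĉ/∂x(λ, x) satisfies |B(λ, x, z)| ≤ C x^{1/2} λ^{−1/2} e^{−λ/8} ϖ(z), where ϖ(z) = z·1_{{z>0}} + (1+z)^{−1/2}·1_{{−1<z≤0}} + 1. -/

import Mathlib

open MeasureTheory Real Set intervalIntegral

/-- Standard normal density φ(a) = (2π)^{−1/2} e^{−a²/2}. -/
noncomputable def stdNormalPdf (a : ℝ) : ℝ :=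
  (Real.sqrt (2 * Real.pi))⁻¹ * Real.exp (-(a ^ 2) / 2)

/-- Standard normal distribution function Φ(a) = ∫_{−∞}^a φ(s) ds. -/
noncomputable def stdNormalCdf (a : ℝ) : ℝ :=
  ∫ s in Set.Iio a, stdNormalPdf s

/-- d(λ, x) = ln(x/K)/√λ + √λ/2. -/
noncomputable def bsD (K lam x : ℝ) : ℝ :=
  Real.log (x / K) / Real.sqrt lam + Real.sqrt lam / 2

/-- Black–Scholes call price with strike K, zero interest rate and total
remaining variance λ: Ĉ(λ, x) = x Φ(d(λ, x)) − K Φ(d(λ, x) − √λ). -/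
noncomputable def bsPrice (K lam x : ℝ) : ℝ :=
  x * stdNormalCdf (bsD K lam x) - K * stdNormalCdf (bsD K lam x - Real.sqrt lam)

lemma pdf_cont : Continuous stdNormalPdf := by
  unfold stdNormalPdf; fun_prop

lemma pdf_integrable : Integrable stdNormalPdf := by
  have h : Integrable (fun s : ℝ => Real.exp (-(1/2 : ℝ) * s ^ 2)) :=
    integrable_exp_neg_mul_sq (by norm_num)
  have := h.const_mul (Real.sqrt (2 * Real.pi))⁻¹
  refine this.congr ?_
  filter_upwards with s
  unfold stdNormalPdf
  ring_nf

lemma cdf_hasDeriv (a : ℝ) : HasDerivAt stdNormalCdf (stdNormalPdf a) a := by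
  have key : ∀ b : ℝ, stdNormalCdf b
      = (∫ s in Set.Iio (0:ℝ), stdNormalPdf s) + ∫ s in (0:ℝ)..b, stdNormalPdf s := by
    intro b
    unfold stdNormalCdf
    rw [← MeasureTheory.integral_Iic_eq_integral_Iio,
      ← MeasureTheory.integral_Iic_eq_integral_Iio,
      ← intervalIntegral.integral_Iic_sub_Iic pdf_integrable.integrableOn
        pdf_integrable.integrableOn]
    ring
  have h : HasDerivAt (fun b => (∫ s in Set.Iio (0:ℝ), stdNormalPdf s)
      + ∫ s in (0:ℝ)..b, stdNormalPdf s) (stdNormalPdf a) a := by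
    have := intervalIntegral.integral_hasDerivAt_right
      (pdf_integrable.intervalIntegrable)
      (pdf_cont.stronglyMeasurableAtFilter _ _) pdf_cont.continuousAt (a := 0) (b := a)
    exact this.const_add _
  exact h.congr_of_eventuallyEq (Filter.Eventually.of_forall fun b => (key b))

lemma bsD_hasDeriv (K lam x : ℝ) (hK : 0 < K) (hlam : 0 < lam) (hx : 0 < x) :
    HasDerivAt (fun s => bsD K lam s) (1 / (x * Real.sqrt lam)) x := by
  have hs : Real.sqrt lam ≠ 0 := ne_of_gt (Real.sqrt_pos.2 hlam)
  have h1 : HasDerivAt (fun s : ℝ => s / K) (1 / K) x := (hasDerivAt_id x).div_const K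
  have h2 : HasDerivAt (fun s : ℝ => Real.log (s / K)) ((1 / K) / (x / K)) x :=
    h1.log (ne_of_gt (div_pos hx hK))
  have h3 := (h2.div_const (Real.sqrt lam)).add_const (Real.sqrt lam / 2)
  rw [show 1 / (x * Real.sqrt lam) = 1 / K / (x / K) / Real.sqrt lam by
    field_simp [hx.ne', hK.ne']]
  exact h3

lemma pdf_identity (K lam x : ℝ) (hK : 0 < K) (hlam : 0 < lam) (hx : 0 < x) :
    x * stdNormalPdf (bsD K lam x) = K * stdNormalPdf (bsD K lam x - Real.sqrt lam) := by
  have hs : Real.sqrt lam ≠ 0 := ne_of_gt (Real.sqrt_pos.2 hlam)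
  have hsq : Real.sqrt lam ^ 2 = lam := Real.sq_sqrt hlam.le
  have hd : bsD K lam x * Real.sqrt lam = Real.log (x / K) + lam / 2 := by
    unfold bsD; field_simp; nlinarith [hsq]
  unfold stdNormalPdf
  have : -((bsD K lam x - Real.sqrt lam) ^ 2) / 2
      = -(bsD K lam x ^ 2) / 2 + Real.log (x / K) := by
    have : bsD K lam x * Real.sqrt lam = Real.log (x / K) + lam / 2 := hd
    nlinarith [hsq]
  rw [this, Real.exp_add, Real.exp_log (div_pos hx hK)]
  field_simp

lemma pdf_bound (K lam x : ℝ) (hK : 0 < K) (hlam : 0 < lam) (hx : 0 < x) :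
    stdNormalPdf (bsD K lam x)
      ≤ (Real.sqrt (2 * Real.pi))⁻¹ * Real.sqrt K * x ^ (-(1/2 : ℝ))
        * Real.exp (-lam / 8) := by
  have hs : Real.sqrt lam ≠ 0 := ne_of_gt (Real.sqrt_pos.2 hlam)
  have hsq : Real.sqrt lam ^ 2 = lam := Real.sq_sqrt hlam.le
  set t := Real.log (x / K) / Real.sqrt lam with ht
  have htl : t * Real.sqrt lam = Real.log (x / K) := div_mul_cancel₀ _ hs
  have hd2 : -(bsD K lam x ^ 2) / 2 = -(t^2)/2 + (-(Real.log (x / K)) / 2) + (-lam/8) := by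
    unfold bsD; rw [← ht]; nlinarith [hsq, htl]
  have h1 : Real.exp (-(t^2)/2) ≤ 1 := Real.exp_le_one_iff.2 (by nlinarith [sq_nonneg t])
  have h2 : Real.exp (-(Real.log (x / K)) / 2) = Real.sqrt K * x ^ (-(1/2 : ℝ)) := by
    rw [Real.log_div (ne_of_gt hx) (ne_of_gt hK)]
    rw [show -(Real.log x - Real.log K) / 2 = Real.log x * (-(1/2)) + Real.log K * (1/2) by ring]
    rw [Real.exp_add, ← Real.rpow_def_of_pos hx, ← Real.rpow_def_of_pos hK,
      Real.sqrt_eq_rpow]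
    ring
  unfold stdNormalPdf
  rw [hd2, Real.exp_add, Real.exp_add, h2]
  calc (Real.sqrt (2 * Real.pi))⁻¹ * (Real.exp (-(t^2)/2) * (Real.sqrt K * x ^ (-(1/2 : ℝ))) * Real.exp (-lam/8))
      ≤ (Real.sqrt (2 * Real.pi))⁻¹ * (1 * (Real.sqrt K * x ^ (-(1/2 : ℝ))) * Real.exp (-lam/8)) := by
        apply mul_le_mul_of_nonneg_left _ (by positivity)
        apply mul_le_mul_of_nonneg_right (mul_le_mul_of_nonneg_right h1 (by positivity)) (by positivity)
    _ = (Real.sqrt (2 * Real.pi))⁻¹ * Real.sqrt K * x ^ (-(1/2 : ℝ)) * Real.exp (-lam / 8) := by ring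

lemma cdf_comp_hasDeriv (K lam x : ℝ) (hK : 0 < K) (hlam : 0 < lam) (hx : 0 < x) :
    HasDerivAt (fun s => stdNormalCdf (bsD K lam s))
      (stdNormalPdf (bsD K lam x) * (1 / (x * Real.sqrt lam))) x :=
  (cdf_hasDeriv (bsD K lam x)).comp x (bsD_hasDeriv K lam x hK hlam hx)

lemma bsPrice_hasDeriv (K lam x : ℝ) (hK : 0 < K) (hlam : 0 < lam) (hx : 0 < x) :
    HasDerivAt (fun s => bsPrice K lam s) (stdNormalCdf (bsD K lam x)) x := by
  have hΦ := cdf_comp_hasDeriv K lam x hK hlam hx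
  have hΦ2 : HasDerivAt (fun s => stdNormalCdf (bsD K lam s - Real.sqrt lam))
      (stdNormalPdf (bsD K lam x - Real.sqrt lam) * (1 / (x * Real.sqrt lam))) x :=
    HasDerivAt.comp (h₂ := stdNormalCdf) x (cdf_hasDeriv (bsD K lam x - Real.sqrt lam))
      ((bsD_hasDeriv K lam x hK hlam hx).sub_const (Real.sqrt lam))
  have h1 : HasDerivAt (fun s => s * stdNormalCdf (bsD K lam s))
      (1 * stdNormalCdf (bsD K lam x)
        + x * (stdNormalPdf (bsD K lam x) * (1 / (x * Real.sqrt lam)))) x :=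
    (hasDerivAt_id x).mul hΦ
  have h := h1.sub (hΦ2.const_mul K)
  have key : 1 * stdNormalCdf (bsD K lam x)
      + x * (stdNormalPdf (bsD K lam x) * (1 / (x * Real.sqrt lam)))
      - K * (stdNormalPdf (bsD K lam x - Real.sqrt lam) * (1 / (x * Real.sqrt lam)))
      = stdNormalCdf (bsD K lam x) := by
    have hid := pdf_identity K lam x hK hlam hx
    have hxs : x * Real.sqrt lam ≠ 0 := by positivity
    field_simp
    linarith [hid]
  rw [key] at h
  exact h

lemma pdf_nonneg (y : ℝ) : 0 ≤ stdNormalPdf y := by unfold stdNormalPdf; positivity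

lemma cdf_diff_bound (K lam a b : ℝ) (hK : 0 < K) (hlam : 0 < lam) (ha : 0 < a)
    (hab : a ≤ b) :
    0 ≤ stdNormalCdf (bsD K lam b) - stdNormalCdf (bsD K lam a) ∧
    stdNormalCdf (bsD K lam b) - stdNormalCdf (bsD K lam a)
      ≤ 2 * ((Real.sqrt (2 * Real.pi))⁻¹ * Real.sqrt K) * a ^ (-(1/2 : ℝ))
        * lam ^ (-(1/2 : ℝ)) * Real.exp (-lam / 8) := by
  have hsl : (0:ℝ) < Real.sqrt lam := Real.sqrt_pos.2 hlam
  set c0 : ℝ := (Real.sqrt (2 * Real.pi))⁻¹ * Real.sqrt K with hc0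
  set Γ : ℝ → ℝ := fun s => stdNormalPdf (bsD K lam s) * (1 / (s * Real.sqrt lam)) with hΓ
  have hpos : ∀ s ∈ Set.uIcc a b, 0 < s := by
    intro s hs; rw [Set.uIcc_of_le hab] at hs; exact lt_of_lt_of_le ha hs.1
  have hbsD : ContinuousOn (fun s => bsD K lam s) (Set.uIcc a b) := by
    unfold bsD
    apply ContinuousOn.add _ continuousOn_const
    apply ContinuousOn.div_const
    exact ContinuousOn.log (continuousOn_id.div_const K)
      (fun s hs => div_ne_zero (ne_of_gt (hpos s hs)) (ne_of_gt hK))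
  have hcont : ContinuousOn Γ (Set.uIcc a b) := by
    apply ContinuousOn.mul (pdf_cont.comp_continuousOn hbsD)
    apply ContinuousOn.div continuousOn_const
      ((continuousOn_id.mul continuousOn_const))
    exact fun s hs => mul_ne_zero (ne_of_gt (hpos s hs)) (ne_of_gt hsl)
  have hint : IntervalIntegrable Γ volume a b := hcont.intervalIntegrable
  have heq : ∫ s in a..b, Γ s
      = stdNormalCdf (bsD K lam b) - stdNormalCdf (bsD K lam a) :=
    intervalIntegral.integral_eq_sub_of_hasDerivAt
      (fun s hs => cdf_comp_hasDeriv K lam s hK hlam (hpos s hs)) hint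
  have hΓnonneg : ∀ s ∈ Set.Icc a b, 0 ≤ Γ s := by
    intro s hs
    have hs0 : 0 < s := lt_of_lt_of_le ha hs.1
    exact mul_nonneg (pdf_nonneg _) (by positivity)
  constructor
  · rw [← heq]; exact intervalIntegral.integral_nonneg hab hΓnonneg
  · rw [← heq]
    set c1 : ℝ := c0 * lam ^ (-(1/2 : ℝ)) * Real.exp (-lam / 8) with hc1
    have hptwise : ∀ s ∈ Set.Icc a b, Γ s ≤ c1 * s ^ (-(3/2 : ℝ)) := by
      intro s hs
      have hs0 : 0 < s := lt_of_lt_of_le ha hs.1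
      have h1 := pdf_bound K lam s hK hlam hs0
      have h2 : stdNormalPdf (bsD K lam s) * (1 / (s * Real.sqrt lam))
          ≤ (c0 * s ^ (-(1/2 : ℝ)) * Real.exp (-lam/8)) * (1 / (s * Real.sqrt lam)) := by
        refine mul_le_mul_of_nonneg_right ?_ (by positivity)
        rw [hc0]; exact h1
      refine le_trans h2 (le_of_eq ?_)
      have e1 : (1 : ℝ) / (s * Real.sqrt lam) = s ^ (-(1:ℝ)) * lam ^ (-(1/2 : ℝ)) := by
        rw [Real.rpow_neg_one, Real.rpow_neg hlam.le, ← Real.sqrt_eq_rpow]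
        rw [one_div, mul_inv]
      rw [e1, hc1]
      rw [show (-(3/2 : ℝ)) = (-(1/2:ℝ)) + (-(1:ℝ)) by norm_num,
        Real.rpow_add hs0]
      ring
    have hint2 : IntervalIntegrable (fun s => c1 * s ^ (-(3/2 : ℝ))) volume a b := by
      apply ContinuousOn.intervalIntegrable
      apply ContinuousOn.mul continuousOn_const
      exact ContinuousOn.rpow_const continuousOn_id
        (fun s hs => Or.inl (ne_of_gt (hpos s hs)))
    have hmono := intervalIntegral.integral_mono_on hab hint hint2 hptwise
    have hc1nonneg : 0 ≤ c1 := by positivity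
    have hval : ∫ s in a..b, c1 * s ^ (-(3/2 : ℝ))
        = c1 * ((b ^ (-(1/2:ℝ)) - a ^ (-(1/2:ℝ))) / (-(1/2:ℝ))) := by
      rw [intervalIntegral.integral_const_mul, integral_rpow]
      · norm_num
      · right
        constructor
        · norm_num
        · rw [Set.uIcc_of_le hab]
          intro h0
          exact absurd rfl (ne_of_gt (lt_of_lt_of_le ha h0.1))
    have hb0 : (0:ℝ) ≤ b ^ (-(1/2:ℝ)) := Real.rpow_nonneg (le_trans ha.le hab) _
    calc ∫ s in a..b, Γ s ≤ ∫ s in a..b, c1 * s ^ (-(3/2 : ℝ)) := hmono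
      _ = c1 * ((b ^ (-(1/2:ℝ)) - a ^ (-(1/2:ℝ))) / (-(1/2:ℝ))) := hval
      _ = c1 * (2 * a ^ (-(1/2:ℝ)) - 2 * b ^ (-(1/2:ℝ))) := by ring
      _ ≤ c1 * (2 * a ^ (-(1/2:ℝ))) := by nlinarith
      _ = 2 * c0 * a ^ (-(1/2 : ℝ)) * lam ^ (-(1/2 : ℝ)) * Real.exp (-lam / 8) := by
          rw [hc1]; ring

lemma cdf_cont : Continuous stdNormalCdf := by
  have h : Differentiable ℝ stdNormalCdf := fun a => (cdf_hasDeriv a).differentiableAt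
  exact h.continuous


/-- ϖ(z) = z·1_{z>0} + (1+z)^{−1/2}·1_{−1<z≤0} + 1. -/
noncomputable def varpi (z : ℝ) : ℝ :=
  (if 0 < z then z else 0)
    + (if -1 < z ∧ z ≤ 0 then (1 + z) ^ (-(1 / 2) : ℝ) else 0) + 1

/- STATEMENT 16: There exists C > 0 (depending only on K) such that for all
   λ > 0, x > 0 and z > −1, the Taylor remainder
   B(λ,x,z) = Ĉ(λ, x(1+z)) − Ĉ(λ,x) − zx ∂Ĉ/∂x(λ,x) satisfies
   |B(λ,x,z)| ≤ C x^{1/2} λ^{−1/2} e^{−λ/8} ϖ(z). -/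
theorem bs_jump_remainder_bound (K : ℝ) (hK : 0 < K) :
    ∃ C : ℝ, 0 < C ∧ ∀ lam x z : ℝ, 0 < lam → 0 < x → -1 < z →
      |bsPrice K lam (x * (1 + z)) - bsPrice K lam x
          - z * x * deriv (bsPrice K lam) x|
        ≤ C * x ^ ((1 : ℝ) / 2) * lam ^ (-(1 / 2) : ℝ) * Real.exp (-lam / 8)
            * varpi z := by
  set c0 : ℝ := (Real.sqrt (2 * Real.pi))⁻¹ * Real.sqrt K with hc0
  have hc0pos : 0 < c0 := by
    apply mul_pos (inv_pos.2 (Real.sqrt_pos.2 (by positivity))) (Real.sqrt_pos.2 hK)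
  refine ⟨2 * c0, by positivity, ?_⟩
  intro lam x z hlam hx hz
  have h1z : (0:ℝ) < 1 + z := by linarith
  set y : ℝ := x * (1 + z) with hy
  have hy0 : 0 < y := mul_pos hx h1z
  set a : ℝ := min x y with hadef
  set b : ℝ := max x y with hbdef
  have ha0 : 0 < a := lt_min hx hy0
  have hab : a ≤ b := min_le_max
  have hax : a ≤ x := min_le_left _ _
  have hay : a ≤ y := min_le_right _ _
  have hxb : x ≤ b := le_max_left _ _
  have hyb : y ≤ b := le_max_right _ _
  set g : ℝ → ℝ := fun s => stdNormalCdf (bsD K lam s) with hg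
  have hpos : ∀ s ∈ Set.uIcc x y, 0 < s := by
    intro s hs
    exact lt_of_lt_of_le ha0 hs.1
  have hbsD : ContinuousOn (fun s => bsD K lam s) (Set.uIcc x y) := by
    unfold bsD
    apply ContinuousOn.add _ continuousOn_const
    apply ContinuousOn.div_const
    exact ContinuousOn.log (continuousOn_id.div_const K)
      (fun s hs => div_ne_zero (ne_of_gt (hpos s hs)) (ne_of_gt hK))
  have hgcont : ContinuousOn g (Set.uIcc x y) := cdf_cont.comp_continuousOn hbsD
  have hgint : IntervalIntegrable g volume x y := hgcont.intervalIntegrable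
  have heq1 : ∫ s in x..y, g s = bsPrice K lam y - bsPrice K lam x :=
    intervalIntegral.integral_eq_sub_of_hasDerivAt
      (fun s hs => bsPrice_hasDeriv K lam s hK hlam (hpos s hs)) hgint
  have hder : deriv (bsPrice K lam) x = g x :=
    (bsPrice_hasDeriv K lam x hK hlam hx).deriv
  have heq2 : ∫ _s in x..y, g x = z * x * g x := by
    rw [intervalIntegral.integral_const, smul_eq_mul]
    rw [hy]; ring
  have hB : bsPrice K lam y - bsPrice K lam x - z * x * deriv (bsPrice K lam) x
      = ∫ s in x..y, (g s - g x) := by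
    rw [intervalIntegral.integral_sub hgint intervalIntegrable_const, heq1, heq2, hder]
  set E : ℝ := lam ^ (-(1/2 : ℝ)) * Real.exp (-lam / 8) with hE
  have hEpos : 0 < E := by positivity
  set D : ℝ := 2 * c0 * a ^ (-(1/2 : ℝ)) * lam ^ (-(1/2 : ℝ)) * Real.exp (-lam / 8)
    with hD
  have hDpos : 0 < D := by positivity
  have hgab := cdf_diff_bound K lam a b hK hlam ha0 hab
  have hbnd : ∀ s ∈ Set.uIoc x y, ‖g s - g x‖ ≤ D := by
    intro s hs
    have hs' : s ∈ Set.uIcc x y := Set.uIoc_subset_uIcc hs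
    have has : a ≤ s := hs'.1
    have hsb : s ≤ b := hs'.2
    have hs0 : 0 < s := lt_of_lt_of_le ha0 has
    have h1 := (cdf_diff_bound K lam s b hK hlam hs0 hsb).1
    have h2 := (cdf_diff_bound K lam a s hK hlam ha0 has).1
    have h3 := (cdf_diff_bound K lam x b hK hlam hx hxb).1
    have h4 := (cdf_diff_bound K lam a x hK hlam ha0 hax).1
    have h5 : stdNormalCdf (bsD K lam b) - stdNormalCdf (bsD K lam a) ≤ D := by
      rw [hD, hc0]; exact hgab.2
    rw [Real.norm_eq_abs, abs_le]
    constructor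
    · simp only [hg]; linarith
    · simp only [hg]; linarith
  have hInt : ‖∫ s in x..y, (g s - g x)‖ ≤ D * |y - x| :=
    intervalIntegral.norm_integral_le_of_norm_le_const hbnd
  have hyx : |y - x| = x * |z| := by
    rw [hy, show x * (1 + z) - x = x * z by ring, abs_mul, abs_of_pos hx]
  have hxp : x ^ (-(1/2:ℝ)) * x = x ^ ((1:ℝ)/2) :=
    calc x ^ (-(1/2:ℝ)) * x = x ^ (-(1/2:ℝ)) * x ^ (1:ℝ) := by rw [Real.rpow_one]
      _ = x ^ (-(1/2:ℝ) + 1) := (Real.rpow_add hx _ _).symm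
      _ = x ^ ((1:ℝ)/2) := by norm_num
  have hkey : a ^ (-(1/2 : ℝ)) * (x * |z|) ≤ x ^ ((1:ℝ)/2) * varpi z := by
    by_cases hz0 : 0 < z
    · have ha : a = x := by rw [hadef, hy, min_eq_left]; nlinarith
      have hzv : z ≤ varpi z := by
        unfold varpi
        rw [if_pos hz0, if_neg (by rintro ⟨_, h⟩; linarith)]
        linarith
      rw [ha, abs_of_pos hz0]
      calc x ^ (-(1/2:ℝ)) * (x * z) = (x ^ (-(1/2:ℝ)) * x) * z := by ring
        _ = x ^ ((1:ℝ)/2) * z := by rw [hxp]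
        _ ≤ x ^ ((1:ℝ)/2) * varpi z := by
            apply mul_le_mul_of_nonneg_left hzv (by positivity)
    · push_neg at hz0
      have ha : a = y := by rw [hadef, hy, min_eq_right]; nlinarith
      have habs : |z| ≤ 1 := abs_le.2 ⟨by linarith, by linarith⟩
      have hv : (1+z) ^ (-(1/2 : ℝ)) ≤ varpi z := by
        unfold varpi
        rw [if_neg (by linarith), if_pos ⟨hz, hz0⟩]
        linarith
      have hsplit : a ^ (-(1/2:ℝ)) = x ^ (-(1/2:ℝ)) * (1+z) ^ (-(1/2:ℝ)) := by
        rw [ha, hy, Real.mul_rpow hx.le h1z.le]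
      have h1zp : 0 < (1+z) ^ (-(1/2:ℝ)) := Real.rpow_pos_of_pos h1z _
      rw [hsplit]
      calc x ^ (-(1/2:ℝ)) * (1+z) ^ (-(1/2:ℝ)) * (x * |z|)
          = (x ^ (-(1/2:ℝ)) * x) * ((1+z) ^ (-(1/2:ℝ)) * |z|) := by ring
        _ ≤ (x ^ (-(1/2:ℝ)) * x) * ((1+z) ^ (-(1/2:ℝ)) * 1) := by
            apply mul_le_mul_of_nonneg_left
              (mul_le_mul_of_nonneg_left habs h1zp.le) (by positivity)
        _ = x ^ ((1:ℝ)/2) * (1+z) ^ (-(1/2:ℝ)) := by rw [hxp]; ring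
        _ ≤ x ^ ((1:ℝ)/2) * varpi z := by
            apply mul_le_mul_of_nonneg_left hv (by positivity)
  calc |bsPrice K lam y - bsPrice K lam x - z * x * deriv (bsPrice K lam) x|
      = ‖∫ s in x..y, (g s - g x)‖ := by rw [hB, Real.norm_eq_abs]
    _ ≤ D * |y - x| := hInt
    _ = (2 * c0 * lam ^ (-(1/2 : ℝ)) * Real.exp (-lam / 8))
        * (a ^ (-(1/2 : ℝ)) * (x * |z|)) := by rw [hD, hyx]; ring
    _ ≤ (2 * c0 * lam ^ (-(1/2 : ℝ)) * Real.exp (-lam / 8))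
        * (x ^ ((1:ℝ)/2) * varpi z) := by
          apply mul_le_mul_of_nonneg_left hkey (by positivity)
    _ = 2 * c0 * x ^ ((1 : ℝ) / 2) * lam ^ (-(1 / 2) : ℝ) * Real.exp (-lam / 8)
        * varpi z := by ring
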